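/- Define R : ℝ → ℝ by R(x) = ((if x ≤ 1 then (x+1)² else x²) - 4)². Then the set of global minimum points of R is {-3, 1, 2}, each attaining the global minimum value 0. -/

import Mathlib

theorem table_row2_minima :
    {x : ℝ | ∀ y : ℝ, ((if x ≤ 1 then (x+1)^2 else x^2) - 4)^2 ≤
        ((if y ≤ 1 then (y+1)^2 else y^2) - 4)^2} = ({-3, 1, 2} : Set ℝ) ∧
    ∀ x ∈ ({-3, 1, 2} : Set ℝ),
      ((if x ≤ 1 then (x+1)^2 else x^2) - 4)^2 = 0 := by
  have hval : ∀ x ∈ ({-3, 1, 2} : Set ℝ),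
      ((if x ≤ 1 then (x+1)^2 else x^2) - 4)^2 = 0 := by
    intro x hx
    rcases hx with h | h | h <;> subst h <;> norm_num
  refine ⟨?_, hval⟩
  ext x
  simp only [Set.mem_setOf_eq]
  constructor
  · intro h
    have h1 := h 1
    norm_num at h1
    have h0 : ((if x ≤ 1 then (x+1)^2 else x^2) - 4)^2 = 0 :=
      by simp [h1]
    have h4 : (if x ≤ 1 then (x+1)^2 else x^2) = 4 := by
      have := pow_eq_zero_iff (n := 2) (by norm_num) |>.mp h0
      linarith
    by_cases hx : x ≤ 1
    · rw [if_pos hx] at h4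
      have : (x - 1) * (x + 3) = 0 := by ring_nf; nlinarith
      rcases mul_eq_zero.mp this with h' | h'
      · right; left; linarith
      · left; show x = -3; linarith
    · rw [if_neg hx] at h4
      push_neg at hx
      have : (x - 2) * (x + 2) = 0 := by nlinarith
      rcases mul_eq_zero.mp this with h' | h'
      · right; right; show x = 2; linarith
      · linarith
  · intro hx y
    rw [hval x hx]
    exact sq_nonneg _
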